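/- Discrete Snell envelope optimal stopping: with Z the discrete Snell envelope of an adapted integrable process G on {0,…,M}, the stopping time τ* := min{ m : Z_m = G_m } satisfies Z_0 = E[G_{τ*}] = sup over stopping times τ with values in {0,…,M} of E[G_τ], provided F_0 is trivial. -/

import Mathlib

open MeasureTheory

/-- Discrete Snell envelope optimal stopping: with `ℱ 0` trivial, the first
time `τ*` at which `Z` meets `G` satisfies
`E[Z 0] = E[G_{τ*}] = sup_τ E[G_τ]` over `{0,…,M}`-valued stopping times. -/
theorem discrete_snell_optimal_stopping {Ω : Type*}
    {m0 : MeasurableSpace Ω} (μ : Measure Ω) [IsProbabilityMeasure μ]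
    (ℱ : Filtration ℕ m0) (M : ℕ) (G Z : ℕ → Ω → ℝ)
    (hGadapted : Adapted ℱ G) (hGint : ∀ m, Integrable (G m) μ)
    (htrivial : ℱ 0 = (⊥ : MeasurableSpace Ω))
    (hZM : Z M = G M)
    (hZrec : ∀ m < M, Z m = fun ω => max (G m ω) ((μ[Z (m + 1)|ℱ m]) ω))
    (τs : Ω → ℕ) (hτs : ∀ ω, τs ω = sInf {m : ℕ | m = M ∨ Z m ω = G m ω}) :
    (∫ ω, Z 0 ω ∂μ) = ∫ ω, G (τs ω) ω ∂μ ∧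
    (∀ τ : Ω → ℕ, IsStoppingTime ℱ (fun ω => (τ ω : WithTop ℕ)) → (∀ ω, τ ω ≤ M) →
      ∫ ω, G (τ ω) ω ∂μ ≤ ∫ ω, G (τs ω) ω ∂μ) := by
  have hle : ∀ m, ℱ m ≤ m0 := fun m => ℱ.le m
  -- Z is integrable and adapted (downward induction)
  have hZmeas : ∀ d, Integrable (Z (M - d)) μ ∧ StronglyMeasurable[ℱ (M - d)] (Z (M - d)) := by
    intro d
    induction d with
    | zero =>
      simp only [Nat.sub_zero, hZM]
      exact ⟨hGint M, (hGadapted M).stronglyMeasurable⟩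
    | succ d ih =>
      rcases le_or_gt M d with h | h
      · have hd : M - (d + 1) = M - d := by omega
        rw [hd]; exact ih
      · have hm : M - (d + 1) < M := by omega
        have hs : M - (d + 1) + 1 = M - d := by omega
        rw [hZrec (M - (d + 1)) hm]
        refine ⟨(hGint (M - (d + 1))).sup integrable_condExp, ?_⟩
        exact @StronglyMeasurable.sup Ω ℝ (G (M - (d + 1))) _ (ℱ (M - (d + 1))) _ _ _
          (hGadapted (M - (d + 1))).stronglyMeasurable stronglyMeasurable_condExp
  have hZint : ∀ m, m ≤ M → Integrable (Z m) μ := by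
    intro m hm
    have := (hZmeas (M - m)).1
    rwa [Nat.sub_sub_self hm] at this
  have hZadp : ∀ m, m ≤ M → StronglyMeasurable[ℱ m] (Z m) := by
    intro m hm
    have := (hZmeas (M - m)).2
    rwa [Nat.sub_sub_self hm] at this
  -- G ≤ Z pointwise
  have hGZ : ∀ m, m ≤ M → ∀ ω, G m ω ≤ Z m ω := by
    intro m hm ω
    rcases lt_or_eq_of_le hm with h | h
    · rw [hZrec m h]; exact le_max_left _ _
    · subst h; rw [hZM]
  -- basic facts about τs
  have hMem : ∀ ω, M ∈ {m : ℕ | m = M ∨ Z m ω = G m ω} := fun ω => Or.inl rfl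
  have hτsM : ∀ ω, τs ω ≤ M := fun ω => by
    rw [hτs ω]; exact Nat.sInf_le (hMem ω)
  have hτsZG : ∀ ω, Z (τs ω) ω = G (τs ω) ω := by
    intro ω
    have h : τs ω ∈ {m : ℕ | m = M ∨ Z m ω = G m ω} := by
      rw [hτs ω]; exact Nat.sInf_mem ⟨M, hMem ω⟩
    rcases h with h | h
    · rw [h, hZM]
    · exact h
  have hτsCE : ∀ m, m < M → ∀ ω, m < τs ω → Z m ω = (μ[Z (m + 1)|ℱ m]) ω := by
    intro m hm ω hlt
    rw [hτs ω] at hlt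
    have hnot := Nat.notMem_of_lt_sInf hlt
    simp only [Set.mem_setOf_eq, not_or] at hnot
    have hz : Z m ω = max (G m ω) ((μ[Z (m + 1)|ℱ m]) ω) := by rw [hZrec m hm]
    rcases max_choice (G m ω) ((μ[Z (m + 1)|ℱ m]) ω) with h | h
    · exact absurd (hz.trans h) hnot.2
    · exact hz.trans h
  -- τs is a stopping time
  have hτsST : IsStoppingTime ℱ (fun ω => (τs ω : WithTop ℕ)) := by
    intro n
    have hcoe : {ω | ((fun ω => (τs ω : WithTop ℕ)) ω) ≤ (n : WithTop ℕ)} = {ω | τs ω ≤ n} := by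
      ext ω; simp
    suffices hsuf : MeasurableSet[ℱ n] {ω | τs ω ≤ n} by
      convert hsuf using 1
      ext ω; simp
    clear hcoe
    rcases le_or_gt M n with h | h
    · have : {ω | τs ω ≤ n} = Set.univ := by
        ext ω; simp only [Set.mem_setOf_eq, Set.mem_univ, iff_true]
        exact le_trans (hτsM ω) h
      rw [this]; exact MeasurableSet.univ
    · have hset : {ω | τs ω ≤ n} = ⋃ k, ⋃ (_ : k ≤ n), {ω | Z k ω = G k ω} := by
        ext ω
        simp only [Set.mem_setOf_eq, Set.mem_iUnion, exists_prop]
        rw [hτs ω]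
        constructor
        · intro hl
          refine ⟨sInf {m : ℕ | m = M ∨ Z m ω = G m ω}, hl, ?_⟩
          have := Nat.sInf_mem (⟨M, hMem ω⟩ :
            Set.Nonempty {m : ℕ | m = M ∨ Z m ω = G m ω})
          rcases this with h1 | h1
          · omega
          · exact h1
        · rintro ⟨k, hk, hkZ⟩
          exact le_trans (Nat.sInf_le (Or.inr hkZ)) hk
      rw [hset]
      refine MeasurableSet.iUnion fun k => MeasurableSet.iUnion fun hk' => ?_
      have hkM : k ≤ M := by omega
      exact ℱ.mono hk' _
        (measurableSet_eq_fun (hZadp k hkM).measurable (hGadapted k))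
  -- key telescoping lemma for stopped process
  have key : ∀ (τ : Ω → ℕ), IsStoppingTime ℱ (fun ω => (τ ω : WithTop ℕ)) →
      ∀ m, m ≤ M →
      Integrable (fun ω => Z (min m (τ ω)) ω) μ ∧
      (∫ ω, Z (min m (τ ω)) ω ∂μ) ≤ ∫ ω, Z 0 ω ∂μ ∧
      ((∀ k, k < M → ∀ ω, k < τ ω → Z k ω = (μ[Z (k + 1)|ℱ k]) ω) →
        (∫ ω, Z (min m (τ ω)) ω ∂μ) = ∫ ω, Z 0 ω ∂μ) := by
    intro τ hτST m
    induction m with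
    | zero =>
      intro _
      have h0 : (fun ω => Z (min 0 (τ ω)) ω) = Z 0 := by
        funext ω; rw [Nat.zero_min]
      rw [h0]
      exact ⟨hZint 0 (Nat.zero_le M), le_rfl, fun _ => rfl⟩
    | succ m ih =>
      intro hmM
      have hm : m < M := hmM
      obtain ⟨ihint, ihle, iheq⟩ := ih (le_of_lt hm)
      set A := {ω | m < τ ω} with hA
      have hAmeas : MeasurableSet[ℱ m] A := by
        have := (hτST m).compl
        have heq : {ω | ((fun ω => (τ ω : WithTop ℕ)) ω) ≤ (m : WithTop ℕ)}ᶜ = A := by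
          ext ω; simp [A, not_le]
        rw [← heq]; exact this
      have hAm0 : MeasurableSet A := hle m _ hAmeas
      have hstep : (fun ω => Z (min (m + 1) (τ ω)) ω) =
          fun ω => Z (min m (τ ω)) ω + A.indicator (fun ω => Z (m + 1) ω - Z m ω) ω := by
        funext ω
        by_cases h : m < τ ω
        · have h1 : min (m + 1) (τ ω) = m + 1 := by omega
          have h2 : min m (τ ω) = m := by omega
          rw [h1, h2, Set.indicator_of_mem (show ω ∈ A from h)]
          ring
        · have h1 : min (m + 1) (τ ω) = τ ω := by omega
          have h2 : min m (τ ω) = τ ω := by omega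
          rw [h1, h2, Set.indicator_of_notMem (show ω ∉ A from h), add_zero]
      have hind : Integrable (A.indicator fun ω => Z (m + 1) ω - Z m ω) μ :=
        ((hZint (m + 1) hmM).sub (hZint m hm.le)).indicator hAm0
      have hCEeq : (∫ ω in A, Z (m + 1) ω ∂μ) = ∫ ω in A, (μ[Z (m + 1)|ℱ m]) ω ∂μ :=
        (setIntegral_condExp (hle m) (hZint (m + 1) hmM) hAmeas).symm
      have hsplit : (∫ ω, Z (min (m + 1) (τ ω)) ω ∂μ) =
          (∫ ω, Z (min m (τ ω)) ω ∂μ) +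
            ((∫ ω in A, Z (m + 1) ω ∂μ) - ∫ ω in A, Z m ω ∂μ) := by
        rw [hstep, integral_add ihint hind, integral_indicator hAm0,
          integral_sub ((hZint (m + 1) hmM).integrableOn) ((hZint m hm.le).integrableOn)]
      refine ⟨?_, ?_, ?_⟩
      · rw [hstep]; exact ihint.add hind
      · rw [hsplit]
        have hmono : (∫ ω in A, (μ[Z (m + 1)|ℱ m]) ω ∂μ) ≤ ∫ ω in A, Z m ω ∂μ := by
          refine setIntegral_mono_on integrable_condExp.integrableOn
            ((hZint m hm.le).integrableOn) hAm0 ?_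
          intro ω _
          rw [hZrec m hm]
          exact le_max_right _ _
        have := hCEeq.trans_le hmono
        linarith
      · intro hCE
        have heqA : (∫ ω in A, Z m ω ∂μ) = ∫ ω in A, (μ[Z (m + 1)|ℱ m]) ω ∂μ := by
          refine setIntegral_congr_fun hAm0 ?_
          intro ω hω
          exact hCE m hm ω hω
        rw [hsplit, heqA, ← hCEeq]
        rw [iheq hCE]
        ring
  -- integrability of G at a stopping time
  have hGτint : ∀ (τ : Ω → ℕ), IsStoppingTime ℱ (fun ω => (τ ω : WithTop ℕ)) → (∀ ω, τ ω ≤ M) →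
      Integrable (fun ω => G (τ ω) ω) μ := by
    intro τ hτST hτM
    have hrepr : (fun ω => G (τ ω) ω) =
        fun ω => ∑ k ∈ Finset.range (M + 1), ({ω | τ ω = k}).indicator (G k) ω := by
      funext ω
      rw [Finset.sum_eq_single (τ ω)]
      · have hmem : ω ∈ {ω' | τ ω' = τ ω} := Set.mem_setOf.mpr rfl
        exact (Set.indicator_of_mem hmem (G (τ ω))).symm
      · intro k _ hk
        exact Set.indicator_of_notMem (by simp only [Set.mem_setOf_eq]; omega) _
      · intro h
        exact absurd (Finset.mem_range.mpr (Nat.lt_succ_of_le (hτM ω))) h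
    rw [hrepr]
    refine integrable_finset_sum _ ?_
    intro k _
    exact (hGint k).indicator (hle k _ (by simpa using hτST.measurableSet_eq k))
  -- stopped Z at time M equals Z at τ
  have hminM : ∀ (τ : Ω → ℕ), (∀ ω, τ ω ≤ M) →
      (fun ω => Z (min M (τ ω)) ω) = fun ω => Z (τ ω) ω := by
    intro τ hτM
    funext ω
    rw [min_eq_right (hτM ω)]
  -- conclusion for τs
  have hτskey := key τs hτsST M le_rfl
  rw [hminM τs hτsM] at hτskey
  have heq0 : (∫ ω, Z (τs ω) ω ∂μ) = ∫ ω, Z 0 ω ∂μ := hτskey.2.2 hτsCE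
  have heqG : (∫ ω, Z (τs ω) ω ∂μ) = ∫ ω, G (τs ω) ω ∂μ := by
    refine integral_congr_ae (Filter.Eventually.of_forall ?_)
    intro ω
    exact hτsZG ω
  constructor
  · rw [← heq0, heqG]
  · intro τ hτST hτM
    have hτkey := key τ hτST M le_rfl
    rw [hminM τ hτM] at hτkey
    have h1 : (∫ ω, G (τ ω) ω ∂μ) ≤ ∫ ω, Z (τ ω) ω ∂μ := by
      refine integral_mono (hGτint τ hτST hτM) hτkey.1 ?_
      intro ω
      exact hGZ (τ ω) (hτM ω) ω
    calc (∫ ω, G (τ ω) ω ∂μ) ≤ ∫ ω, Z (τ ω) ω ∂μ := h1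
      _ ≤ ∫ ω, Z 0 ω ∂μ := hτkey.2.1
      _ = ∫ ω, G (τs ω) ω ∂μ := by rw [← heq0, heqG]
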